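/- Let A be a left brace, X a transitive cycle base of A, and g ∈ X. Define on A the binary operation a•b := (λ_a(g))⁻ ∘ b for all a, b ∈ A, where c⁻ denotes the inverse of c in (A,∘). Then (A,•) is a uniconnected cycle set and its permutation group 𝒢(A,•) is isomorphic to the multiplicative group (A,∘). -/

import Mathlib

/-- A left brace structure on a type carrying an abelian additive group structure `+`
and a (multiplicative) group structure `∘` (written `*`). -/
class LeftBrace (A : Type*) [AddCommGroup A] [Group A] : Prop where
  compat : ∀ a b c : A, a * (b + c) + a = a * b + a * c

section Brace

variable {A : Type*} [AddCommGroup A] [Group A]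

/-- The map `λ_a : b ↦ -a + a ∘ b`, as a permutation of `A`. -/
def lam (a : A) : Equiv.Perm A where
  toFun b := -a + a * b
  invFun b := a⁻¹ * (a + b)
  left_inv b := by simp
  right_inv b := by simp

/-- A subset of a left brace is a sub-left-brace if it is simultaneously (the carrier of)
a subgroup of `(A,+)` and a subgroup of `(A,∘)`. -/
def IsSubBrace (B : Set A) : Prop :=
  ∃ (Sa : AddSubgroup A) (Sm : Subgroup A), (Sa : Set A) = B ∧ (Sm : Set A) = B

/-- `A(x)`: the smallest sub-left-brace containing `x`. -/
def braceClosure (x : A) : Set A := ⋂₀ {B : Set A | IsSubBrace B ∧ x ∈ B}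

end Brace

/-- The socle series of a left brace: `Soc_0 = {0}`,
`Soc_{n+1} = {a | ∀ b, a + b - a∘b ∈ Soc_n}`. -/
def socSeq (A : Type*) [AddCommGroup A] [Group A] : ℕ → Set A
  | 0 => {0}
  | n + 1 => {a | ∀ b, a + b - a * b ∈ socSeq A n}

/-- A left brace has multipermutation level `n` if `n` is minimal with `Soc_n(A) = A`. -/
def BraceMPL (A : Type*) [AddCommGroup A] [Group A] (n : ℕ) : Prop :=
  socSeq A n = Set.univ ∧ ∀ m < n, socSeq A m ≠ Set.univ

structure CycleSet (X : Type*) where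
  mul : X → X → X
  mul_bijective : ∀ x, Function.Bijective (mul x)
  cycloid : ∀ x y z, mul (mul x y) (mul x z) = mul (mul y x) (mul y z)
  nondeg : Function.Bijective (fun x => mul x x)

namespace CycleSet

variable {X : Type*}

/-- The left multiplication `σ_x` as a permutation of `X`. -/
noncomputable def sigma (C : CycleSet X) (x : X) : Equiv.Perm X :=
  Equiv.ofBijective (C.mul x) (C.mul_bijective x)

/-- The permutation group `𝒢(X)` of a cycle set. -/
noncomputable def G (C : CycleSet X) : Subgroup (Equiv.Perm X) :=
  Subgroup.closure (Set.range C.sigma)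

/-- A cycle set is indecomposable if `𝒢(X)` acts transitively on `X`. -/
def Indecomposable (C : CycleSet X) : Prop := ∀ x y : X, ∃ g ∈ C.G, g x = y

/-- A cycle set is uniconnected if `𝒢(X)` acts regularly on `X`. -/
def Uniconnected (C : CycleSet X) : Prop :=
  ∀ x y : X, ∃! g : Equiv.Perm X, g ∈ C.G ∧ g x = y

/-- `MPLrel C n a b` holds iff `a`, `b` have the same image in the `n`-th iterated
retraction `Ret^n(X)`. -/
def MPLrel (C : CycleSet X) : ℕ → X → X → Prop
  | 0 => Eq
  | n + 1 => fun a b => ∀ z, MPLrel C n (C.mul a z) (C.mul b z)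

/-- A cycle set has multipermutation level `n` if `n` is minimal with `|Ret^n(X)| = 1`. -/
def MPL (C : CycleSet X) (n : ℕ) : Prop :=
  (∀ a b, MPLrel C n a b) ∧ ∀ m < n, ∃ a b, ¬ MPLrel C m a b

end CycleSet

/-- `𝒜` is the system of blocks generated by a block `B` for the subgroup `G` of `Sym(Z)`. -/
def IsBlockSystem {Z : Type*} (G : Subgroup (Equiv.Perm Z)) (𝒜 : Set (Set Z)) : Prop :=
  ∃ B : Set Z, B.Nonempty ∧
    (∀ g ∈ G, (⇑g) '' B = B ∨ Disjoint ((⇑g) '' B) B) ∧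
    𝒜 = {A | ∃ g ∈ G, A = (⇑g) '' B}

/-- Two systems of blocks are orthogonal if any two members meet in exactly one point. -/
def OrthSystems {Z : Type*} (𝒜 ℬ : Set (Set Z)) : Prop :=
  ∀ A ∈ 𝒜, ∀ B ∈ ℬ, ∃ z, A ∩ B = {z}

/-- The system of blocks `𝓑_X = {{x} × S : x ∈ X}` on `X × S`. -/
def BXblocks (X S : Type*) : Set (Set (X × S)) :=
  {B | ∃ x : X, B = {p : X × S | p.1 = x}}

/-- The system of blocks `{X × {s} : s ∈ S}` on `X × S`. -/
def SBlocks (X S : Type*) : Set (Set (X × S)) :=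
  {B | ∃ s : S, B = {p : X × S | p.2 = s}}

/-- The system of blocks formed by the classes of the retract relation. -/
def RetBlocks {X : Type*} (C : CycleSet X) : Set (Set X) :=
  {B | ∃ x : X, B = {y : X | ∀ z, C.mul y z = C.mul x z}}

section BraceLemmas

variable {A : Type*} [AddCommGroup A] [Group A] [LeftBrace A]
set_option linter.unusedSectionVars false

lemma lb_mul_add (a b c : A) : a * (b + c) = a * b + a * c - a := by
  rw [eq_sub_iff_add_eq]; exact LeftBrace.compat a b c

lemma lb_one_eq_zero : (1 : A) = 0 := by
  have h := LeftBrace.compat (1 : A) 0 0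
  simpa using h

lemma lb_mul_zero (a : A) : a * (0 : A) = a := by rw [← lb_one_eq_zero, mul_one]

lemma lb_mul_neg (a b : A) : a * (-b) = a + a - a * b := by
  have h := lb_mul_add a b (-b)
  rw [add_neg_cancel, lb_mul_zero] at h
  have h2 : a * b + a * (-b) = a + a := sub_eq_iff_eq_add.mp h.symm
  rw [eq_sub_iff_add_eq, add_comm, h2]

lemma lam_apply (a b : A) : lam a b = -a + a * b := rfl

lemma lb_mul_lam (a b : A) : a * b = a + lam a b := by rw [lam_apply]; abel

lemma lam_add (a b c : A) : lam a (b + c) = lam a b + lam a c := by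
  simp only [lam_apply, lb_mul_add]; abel

lemma lam_zero (a : A) : lam a (0 : A) = 0 := by
  simp [lam_apply, lb_mul_zero]

lemma lam_neg (a b : A) : lam a (-b) = -lam a b := by
  simp only [lam_apply, lb_mul_neg]; abel

lemma lam_one (b : A) : lam (1 : A) b = b := by
  rw [lam_apply, one_mul, lb_one_eq_zero, neg_zero, zero_add]

lemma lam_mul (a b c : A) : lam (a * b) c = lam a (lam b c) := by
  simp only [lam_apply]
  rw [lb_mul_add, lb_mul_neg, mul_assoc]; abel

lemma lb_key (s u : A) : s * lam s⁻¹ u = s + u := by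
  rw [lb_mul_lam, ← lam_mul, mul_inv_cancel, lam_one]

lemma lam_inv_self (s : A) : lam s⁻¹ s = -s⁻¹ := by
  have h : s⁻¹ * s = s⁻¹ + lam s⁻¹ s := lb_mul_lam _ _
  rw [inv_mul_cancel, lb_one_eq_zero] at h
  exact eq_neg_of_add_eq_zero_right h.symm

lemma lam_self_inv (s : A) : lam s s⁻¹ = -s := by
  have h : s * s⁻¹ = s + lam s s⁻¹ := lb_mul_lam _ _
  rw [mul_inv_cancel, lb_one_eq_zero] at h
  exact eq_neg_of_add_eq_zero_right h.symm

lemma lam_neg_inv_aux (z : A) : lam z (-z⁻¹) = z := by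
  rw [lam_apply, lb_mul_neg, mul_inv_cancel, lb_one_eq_zero]; abel

lemma lam_neg_inv (c : A) : lam (-c)⁻¹ c = (-c)⁻¹ := by
  have h := lam_neg_inv_aux (-c)⁻¹
  rwa [inv_inv, neg_neg] at h

lemma lam_mul_add (b u v : A) : lam b (u * v) = lam b u + lam (b * u) v := by
  rw [lam_mul, ← lam_add, ← lb_mul_lam]

lemma lam_inv_decomp (b u : A) : lam b u⁻¹ = -lam (b * u⁻¹) u := by
  calc lam b u⁻¹ = lam (b * u⁻¹ * u) u⁻¹ := by rw [inv_mul_cancel_right]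
    _ = lam (b * u⁻¹) (lam u u⁻¹) := lam_mul _ _ _
    _ = -lam (b * u⁻¹) u := by rw [lam_self_inv, lam_neg]

end BraceLemmas

/-- Rump. Given a left brace `A`, a transitive cycle base `X` and
`g ∈ X`, the operation `a • b := (λ_a(g))⁻ ∘ b` makes `A` a uniconnected cycle set
whose permutation group is isomorphic to `(A,∘)`. -/
theorem stmt4 {A : Type} [AddCommGroup A] [Group A] [LeftBrace A]
    (X : Set A) (g : A) (hg : g ∈ X)
    (horb : X = Set.range fun a : A => lam a g)
    (hgen : AddSubgroup.closure X = ⊤) :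
    ∃ C : CycleSet A,
      (∀ a b : A, C.mul a b = (lam a g)⁻¹ * b) ∧
      C.Uniconnected ∧ Nonempty (C.G ≃* A) := by
  classical
  -- X is invariant under all λ_a
  have hXlam : ∀ (a : A) {x : A}, x ∈ X → lam a x ∈ X := by
    intro a x hx
    rw [horb] at hx ⊢
    obtain ⟨c, hc⟩ := hx
    exact ⟨a * c, by simp only []; rw [lam_mul]; exact congrArg _ hc⟩
  set M : Subgroup A := Subgroup.closure X with hMdef
  have hnegX : ∀ x ∈ X, -x ∈ M := by
    intro x hx
    have h1 : (-x)⁻¹ ∈ X := by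
      have := hXlam (-x)⁻¹ hx
      rwa [lam_neg_inv] at this
    have h2 : ((-x)⁻¹)⁻¹ ∈ M := inv_mem (Subgroup.subset_closure h1)
    rwa [inv_inv] at h2
  have hQ : ∀ m ∈ M, ∀ b : A, lam b m ∈ M ∧ -lam b m ∈ M := by
    intro m hm
    induction hm using Subgroup.closure_induction with
    | mem x hx =>
        intro b
        exact ⟨Subgroup.subset_closure (hXlam b hx), hnegX _ (hXlam b hx)⟩
    | one =>
        intro b
        have h1 : lam b (1 : A) = 1 := by rw [lb_one_eq_zero, lam_zero, ← lb_one_eq_zero]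
        have h2 : -lam b (1 : A) = 1 := by rw [h1, lb_one_eq_zero, neg_zero, ← lb_one_eq_zero]
        exact ⟨by rw [h1]; exact one_mem M, by rw [h2]; exact one_mem M⟩
    | mul u v hu hv ihu ihv =>
        intro b
        constructor
        · rw [lam_mul_add, ← lb_key, ← lam_mul]
          exact mul_mem (ihu b).1 (ihv _).1
        · rw [lam_mul_add, neg_add, ← lb_key, lam_neg, ← lam_mul]
          exact mul_mem (ihu b).2 (ihv _).2
    | inv u hu ihu =>
        intro b
        constructor
        · rw [lam_inv_decomp]
          exact (ihu _).2
        · rw [lam_inv_decomp, neg_neg]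
          exact (ihu _).1
  have hMneg : ∀ m ∈ M, -m ∈ M := by
    intro m hm
    have h := (hQ m hm 1).2
    rwa [lam_one] at h
  have hMadd : ∀ m ∈ M, ∀ m' ∈ M, m + m' ∈ M := by
    intro m hm m' hm'
    rw [← lb_key]
    exact mul_mem hm (hQ m' hm' m⁻¹).1
  have hMtop : ∀ a : A, a ∈ M := by
    intro a
    have ha : a ∈ AddSubgroup.closure X := by rw [hgen]; trivial
    induction ha using AddSubgroup.closure_induction with
    | mem x hx => exact Subgroup.subset_closure hx
    | zero => rw [← lb_one_eq_zero]; exact one_mem M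
    | add u v hu hv ihu ihv => exact hMadd u ihu v ihv
    | neg u hu ihu => exact hMneg u ihu
  have hMeq : M = ⊤ := (Subgroup.eq_top_iff' M).mpr hMtop
  -- the cycle set
  have key2 : ∀ a b : A,
      (lam ((lam a g)⁻¹ * b) g)⁻¹ * (lam a g)⁻¹ = (lam a g + lam b g)⁻¹ := by
    intro a b
    rw [← mul_inv_rev, lam_mul, lb_key]
  let C : CycleSet A :=
          { mul := fun a b => (lam a g)⁻¹ * b
            mul_bijective := fun a => (Equiv.mulLeft ((lam a g)⁻¹)).bijective
            cycloid := by
              intro x y z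
              show (lam ((lam x g)⁻¹ * y) g)⁻¹ * ((lam x g)⁻¹ * z)
                  = (lam ((lam y g)⁻¹ * x) g)⁻¹ * ((lam y g)⁻¹ * z)
              rw [← mul_assoc, ← mul_assoc, key2, key2, add_comm]
            nondeg := by
              rw [Function.bijective_iff_has_inverse]
              refine ⟨fun b => (-lam b g)⁻¹ * b, fun a => ?_, fun b => ?_⟩
              · show (-lam ((lam a g)⁻¹ * a) g)⁻¹ * ((lam a g)⁻¹ * a) = a
                rw [lam_mul, lam_inv_self, neg_neg, inv_inv, ← mul_assoc,
                  mul_inv_cancel, one_mul]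
              · show (lam ((-lam b g)⁻¹ * b) g)⁻¹ * ((-lam b g)⁻¹ * b) = b
                rw [lam_mul, lam_neg_inv, inv_inv, ← mul_assoc, mul_inv_cancel, one_mul] }
  have hLinj : Function.Injective (MulAction.toPermHom A A) := by
    intro a b h
    have h1 : (MulAction.toPermHom A A a) 1 = (MulAction.toPermHom A A b) 1 := by rw [h]
    simpa using h1
  have hsig : ∀ a : A, C.sigma a = MulAction.toPermHom A A ((lam a g)⁻¹) :=
    fun a => Equiv.ext fun b => rfl
  have hLX : ∀ x ∈ X, MulAction.toPermHom A A x ∈ C.G := by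
    intro x hx
    rw [horb] at hx
    obtain ⟨a, rfl⟩ := hx
    have h1 : C.sigma a ∈ C.G := Subgroup.subset_closure ⟨a, rfl⟩
    have h2 := inv_mem h1
    rw [hsig, ← map_inv, inv_inv] at h2
    exact h2
  have hLmem : ∀ m : A, MulAction.toPermHom A A m ∈ C.G := by
    intro m
    have h2 : Subgroup.closure X ≤ Subgroup.comap (MulAction.toPermHom A A) C.G :=
      Subgroup.closure_le _ |>.mpr fun x hx => hLX x hx
    exact Subgroup.mem_comap.mp (h2 (hMtop m))
  have hGeq : C.G = (MulAction.toPermHom A A).range := by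
    apply le_antisymm
    · show Subgroup.closure (Set.range C.sigma) ≤ _
      refine Subgroup.closure_le _ |>.mpr ?_
      rintro _ ⟨a, rfl⟩
      exact ⟨(lam a g)⁻¹, (hsig a).symm⟩
    · rintro e ⟨m, rfl⟩
      exact hLmem m
  refine ⟨C, fun a b => rfl, ?_, ?_⟩
  · intro x y
    refine ⟨MulAction.toPermHom A A (y * x⁻¹), ⟨hLmem _, ?_⟩, ?_⟩
    · show y * x⁻¹ * x = y
      rw [inv_mul_cancel_right]
    · rintro e ⟨he, hex⟩
      rw [hGeq] at he
      obtain ⟨m, rfl⟩ := he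
      have hmx : m * x = y := hex
      rw [← hmx, mul_inv_cancel_right]
  · exact ⟨(MulEquiv.subgroupCongr hGeq).trans (MonoidHom.ofInjective hLinj).symm⟩
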